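/- Let G = (V,E) be a finite simple graph on V = {1,…,n} with n ≥ 1, and for 0 ≤ k ≤ n let z^C_k(G) = z^C_{J_k}(G) where J_k = { I ⊆ V : |I| = k }. Then ϑ(G) = z^C_0(G) = z^C_1(G), z^C_{k-1}(G) ≥ z^C_k(G) for all 1 ≤ k ≤ n, and z^C_n(G) = α(G), where ϑ(G) denotes the optimal value of the semidefinite program sup{ ⟨J_{n×n}, X⟩ : X ∈ CTH²(G) }. -/

import Mathlib

open Matrix

noncomputable section

/-- A stable set vector of a graph `G`: a 0/1 vector with `s i * s j = 0` on edges. -/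
def IsStableVec {V : Type*} (G : SimpleGraph V) (s : V → ℝ) : Prop :=
  (∀ i, s i = 0 ∨ s i = 1) ∧ ∀ i j, G.Adj i j → s i * s j = 0

/-- The squared stable set polytope `STAB²(G) = conv{ s sᵀ : s ∈ S(G) }`. -/
def stab2 {V : Type*} (G : SimpleGraph V) : Set (Matrix V V ℝ) :=
  convexHull ℝ { M | ∃ s, IsStableVec G s ∧ M = Matrix.vecMulVec s s }

/-- The scaled squared stable set polytope
`SSTAB²(G) = conv({ (1/(sᵀs)) s sᵀ : s ∈ S(G), s ≠ 0 } ∪ {0})`. -/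
def sstab2 {V : Type*} [Fintype V] (G : SimpleGraph V) : Set (Matrix V V ℝ) :=
  convexHull ℝ
    ({ M | ∃ s, IsStableVec G s ∧ s ≠ 0 ∧
        M = (∑ k, s k * s k)⁻¹ • Matrix.vecMulVec s s } ∪ {(0 : Matrix V V ℝ)})

/-- The feasible region `TH²(G)` of the SDP (Tn+1): pairs `(x, X)` with `X` symmetric,
`diag X = x`, `X i j = 0` on edges and `X - x xᵀ` positive semidefinite. -/
def th2 {n : ℕ} (G : SimpleGraph (Fin n)) :
    Set ((Fin n → ℝ) × Matrix (Fin n) (Fin n) ℝ) :=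
  { p | p.2.IsSymm ∧ (∀ i, p.2 i i = p.1 i) ∧
      (∀ i j, G.Adj i j → p.2 i j = 0) ∧ (p.2 - Matrix.vecMulVec p.1 p.1).PosSemidef }

/-- The feasible region `CTH²(G)` of the SDP (Tn): symmetric PSD matrices with trace 1
vanishing on edges. -/
def cth2 {n : ℕ} (G : SimpleGraph (Fin n)) : Set (Matrix (Fin n) (Fin n) ℝ) :=
  { X | X.IsSymm ∧ X.trace = 1 ∧ (∀ i j, G.Adj i j → X i j = 0) ∧ X.PosSemidef }

/-- The principal submatrix `X_I` of `X` indexed by `I`. -/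
def subMat {n : ℕ} (X : Matrix (Fin n) (Fin n) ℝ) (I : Finset (Fin n)) :
    Matrix (I : Set (Fin n)) (I : Set (Fin n)) ℝ :=
  X.submatrix Subtype.val Subtype.val

/-- The exact subgraph constraint (ESC) for the subgraph of `G` induced by `I`. -/
def escFeas {n : ℕ} (G : SimpleGraph (Fin n)) (X : Matrix (Fin n) (Fin n) ℝ)
    (I : Finset (Fin n)) : Prop :=
  subMat X I ∈ stab2 (G.induce (I : Set (Fin n)))

/-- The scaled exact subgraph constraint (SESC) for the subgraph of `G` induced by `I`. -/
def sescFeas {n : ℕ} (G : SimpleGraph (Fin n)) (X : Matrix (Fin n) (Fin n) ℝ)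
    (I : Finset (Fin n)) : Prop :=
  subMat X I ∈ sstab2 (G.induce (I : Set (Fin n)))

/-- `z^E_J(G)`: optimal value of (Tn+1) with the ESCs for all `I ∈ J`. -/
def zE {n : ℕ} (G : SimpleGraph (Fin n)) (J : Set (Finset (Fin n))) : ℝ :=
  sSup { r | ∃ x X, (x, X) ∈ th2 G ∧ (∀ I ∈ J, escFeas G X I) ∧ r = ∑ i, x i }

/-- `z^C_J(G)`: optimal value of (Tn) with the ESCs for all `I ∈ J`. -/
def zC {n : ℕ} (G : SimpleGraph (Fin n)) (J : Set (Finset (Fin n))) : ℝ :=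
  sSup { r | ∃ X, X ∈ cth2 G ∧ (∀ I ∈ J, escFeas G X I) ∧ r = ∑ i, ∑ j, X i j }

/-- `z^S_J(G)`: optimal value of (Tn) with the SESCs for all `I ∈ J`. -/
def zS {n : ℕ} (G : SimpleGraph (Fin n)) (J : Set (Finset (Fin n))) : ℝ :=
  sSup { r | ∃ X, X ∈ cth2 G ∧ (∀ I ∈ J, sescFeas G X I) ∧ r = ∑ i, ∑ j, X i j }

/-- The collection `J_k` of all vertex subsets of cardinality `k`. -/
def Jk (n k : ℕ) : Set (Finset (Fin n)) := { I | I.card = k }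

-- HELPERS START
section Helpers

variable {n : ℕ}

lemma IsStableVec.comp {V₁ V₂ : Type*} {G₁ : SimpleGraph V₁} {G₂ : SimpleGraph V₂}
    {s : V₂ → ℝ} (hs : IsStableVec G₂ s) (f : V₁ → V₂)
    (hf : ∀ i j, G₁.Adj i j → G₂.Adj (f i) (f j)) : IsStableVec G₁ (s ∘ f) :=
  ⟨fun i => hs.1 (f i), fun i j h => hs.2 _ _ (hf i j h)⟩

lemma isStableVec_zero {V : Type*} (G : SimpleGraph V) : IsStableVec G 0 :=
  ⟨fun _ => Or.inl rfl, fun _ _ _ => by simp⟩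

lemma vecMulVec_zero' {V : Type*} : Matrix.vecMulVec (0 : V → ℝ) (0 : V → ℝ) = 0 := by
  ext i j; simp [Matrix.vecMulVec_apply]

lemma IsStableVec.sq {V : Type*} {G : SimpleGraph V} {s : V → ℝ} (hs : IsStableVec G s) (i : V) :
    s i * s i = s i := by rcases hs.1 i with h | h <;> rw [h] <;> ring

lemma IsStableVec.nonneg {V : Type*} {G : SimpleGraph V} {s : V → ℝ}
    (hs : IsStableVec G s) (i : V) : 0 ≤ s i := by
  rcases hs.1 i with h | h <;> rw [h] <;> norm_num

lemma vecMulVec_posSemidef {m : Type*} [Fintype m] (s : m → ℝ) :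
    (Matrix.vecMulVec s s).PosSemidef := by
  refine Matrix.PosSemidef.of_dotProduct_mulVec_nonneg ?_ ?_
  · ext i j
    simp [Matrix.conjTranspose_apply, Matrix.vecMulVec_apply, mul_comm]
  · intro x
    have h : star x ⬝ᵥ (Matrix.vecMulVec s s *ᵥ x)
        = (∑ i, s i * x i) * (∑ i, s i * x i) := by
      simp only [star_trivial, dotProduct, Matrix.mulVec, Matrix.vecMulVec_apply]
      rw [Finset.sum_mul]
      refine Finset.sum_congr rfl fun i _ => ?_
      rw [Finset.mul_sum, Finset.mul_sum]
      exact Finset.sum_congr rfl fun j _ => by ring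
    rw [h]
    exact mul_self_nonneg _

lemma posSemidef_smul' {m : Type*} [Fintype m] {M : Matrix m m ℝ} (hM : M.PosSemidef)
    {c : ℝ} (hc : 0 ≤ c) : (c • M).PosSemidef := by
  refine Matrix.PosSemidef.of_dotProduct_mulVec_nonneg ?_ ?_
  · have h1 := hM.1
    unfold Matrix.IsHermitian at h1 ⊢
    rw [Matrix.conjTranspose_smul, h1]
    simp
  · intro x
    have h := hM.dotProduct_mulVec_nonneg x
    rw [Matrix.smul_mulVec, dotProduct_smul]
    exact smul_nonneg hc h


lemma escFeas_scaled {G : SimpleGraph (Fin n)} {s : Fin n → ℝ} (hs : IsStableVec G s)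
    {c : ℝ} (hc0 : 0 ≤ c) (hc1 : c ≤ 1) (I : Finset (Fin n)) :
    escFeas G (c • Matrix.vecMulVec s s) I := by
  show subMat (c • Matrix.vecMulVec s s) I ∈ convexHull ℝ
    { M | ∃ t, IsStableVec (G.induce (I : Set (Fin n))) t ∧ M = Matrix.vecMulVec t t }
  have h1 : Matrix.vecMulVec (s ∘ (Subtype.val : ↥(I : Set (Fin n)) → Fin n)) (s ∘ Subtype.val)
      ∈ { M | ∃ t, IsStableVec (G.induce (I : Set (Fin n))) t ∧ M = Matrix.vecMulVec t t } :=
    ⟨s ∘ Subtype.val, hs.comp _ (fun i j h => h), rfl⟩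
  have h0 : (0 : Matrix ↥(I : Set (Fin n)) ↥(I : Set (Fin n)) ℝ)
      ∈ { M | ∃ t, IsStableVec (G.induce (I : Set (Fin n))) t ∧ M = Matrix.vecMulVec t t } :=
    ⟨0, isStableVec_zero _, vecMulVec_zero'.symm⟩
  have heq : subMat (c • Matrix.vecMulVec s s) I
      = c • Matrix.vecMulVec (s ∘ Subtype.val) (s ∘ Subtype.val)
        + (1 - c) • (0 : Matrix ↥(I : Set (Fin n)) ↥(I : Set (Fin n)) ℝ) := by
    ext p q
    simp [subMat, Matrix.vecMulVec_apply]
  rw [heq]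
  exact segment_subset_convexHull h1 h0 ⟨c, 1 - c, hc0, by linarith, by ring, rfl⟩

lemma esc_mono (G : SimpleGraph (Fin n)) (X : Matrix (Fin n) (Fin n) ℝ)
    {I' I : Finset (Fin n)} (hsub : I' ⊆ I) (hX : escFeas G X I) : escFeas G X I' := by
  let ι : ↥(I' : Set (Fin n)) → ↥(I : Set (Fin n)) := fun x => ⟨x.1, hsub x.2⟩
  let T : Matrix (I : Set (Fin n)) (I : Set (Fin n)) ℝ →ₗ[ℝ]
      Matrix (I' : Set (Fin n)) (I' : Set (Fin n)) ℝ :=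
    { toFun := fun M => M.submatrix ι ι
      map_add' := fun A B => rfl
      map_smul' := fun c A => rfl }
  have hX' : subMat X I ∈ convexHull ℝ
      { M | ∃ t, IsStableVec (G.induce (I : Set (Fin n))) t ∧ M = Matrix.vecMulVec t t } := hX
  have h2 : T (subMat X I) ∈ convexHull ℝ
      (T '' { M | ∃ t, IsStableVec (G.induce (I : Set (Fin n))) t ∧ M = Matrix.vecMulVec t t }) := by
    rw [← T.image_convexHull]
    exact Set.mem_image_of_mem _ hX'
  show subMat X I' ∈ convexHull ℝ
    { M | ∃ t, IsStableVec (G.induce (I' : Set (Fin n))) t ∧ M = Matrix.vecMulVec t t }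
  have himg : subMat X I' = T (subMat X I) := rfl
  rw [himg]
  refine convexHull_mono ?_ h2
  rintro M ⟨M₀, ⟨t, ht, rfl⟩, rfl⟩
  exact ⟨t ∘ ι, ht.comp ι (fun p q h => h), by ext p q; rfl⟩

lemma cth2_diag_nonneg {G : SimpleGraph (Fin n)} {X : Matrix (Fin n) (Fin n) ℝ}
    (hX : X ∈ cth2 G) (i : Fin n) : 0 ≤ X i i := by
  have h := hX.2.2.2.dotProduct_mulVec_nonneg (Pi.single i 1)
  simpa [Matrix.mulVec_single, single_dotProduct] using h

lemma cth2_diag_le_one {G : SimpleGraph (Fin n)} {X : Matrix (Fin n) (Fin n) ℝ}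
    (hX : X ∈ cth2 G) (i : Fin n) : X i i ≤ 1 := by
  have htr := hX.2.1
  have hsum : ∑ j, X j j = 1 := htr
  have := Finset.single_le_sum (f := fun j => X j j) (fun j _ => cth2_diag_nonneg hX j)
    (Finset.mem_univ i)
  linarith

lemma cth2_entry_le {G : SimpleGraph (Fin n)} {X : Matrix (Fin n) (Fin n) ℝ}
    (hX : X ∈ cth2 G) (i j : Fin n) : X i j ≤ (X i i + X j j) / 2 := by
  by_cases hij : i = j
  · subst hij; linarith
  · have h := hX.2.2.2.dotProduct_mulVec_nonneg (Pi.single i 1 - Pi.single j 1)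
    have hsym : X j i = X i j := by
      have h1 := hX.1
      calc X j i = Xᵀ i j := rfl
        _ = X i j := by rw [h1]
    simp only [star_trivial, Matrix.mulVec_sub, sub_dotProduct, dotProduct_sub,
      Matrix.mulVec_single, single_dotProduct, mul_one, one_mul, Pi.sub_apply,
      MulOpposite.op_one, one_smul, Matrix.col_apply] at h
    linarith

lemma cth2_sum_le_n {G : SimpleGraph (Fin n)} {X : Matrix (Fin n) (Fin n) ℝ}
    (hX : X ∈ cth2 G) : ∑ i, ∑ j, X i j ≤ (n : ℝ) := by
  have h1 : ∑ i, ∑ j, X i j ≤ ∑ i, ∑ j, (X i i + X j j) / 2 :=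
    Finset.sum_le_sum fun i _ => Finset.sum_le_sum fun j _ => cth2_entry_le hX i j
  have htr : ∑ j, X j j = 1 := hX.2.1
  have hinner : ∀ i : Fin n, ∑ j : Fin n, (X i i + X j j) / 2 = ((n : ℝ) * X i i + 1) / 2 := by
    intro i
    rw [← Finset.sum_div, Finset.sum_add_distrib, Finset.sum_const, Finset.card_univ,
      Fintype.card_fin, htr, nsmul_eq_mul]
  have h2 : ∑ i : Fin n, ∑ j : Fin n, (X i i + X j j) / 2 = (n : ℝ) := by
    rw [Finset.sum_congr rfl (fun i _ => hinner i), ← Finset.sum_div, Finset.sum_add_distrib,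
      ← Finset.mul_sum, htr, Finset.sum_const, Finset.card_univ, Fintype.card_fin,
      nsmul_eq_mul, mul_one]
    ring
  linarith


lemma stable_feas {G : SimpleGraph (Fin n)} {s : Fin n → ℝ} (hs : IsStableVec G s)
    (hne : ∑ i, s i ≠ 0) :
    ∃ X, X ∈ cth2 G ∧ (∀ I : Finset (Fin n), escFeas G X I) ∧ ∑ i, ∑ j, X i j = ∑ i, s i := by
  set t := ∑ i, s i with ht
  have ht1 : 1 ≤ t := by
    by_contra hlt
    push_neg at hlt
    apply hne
    refine Finset.sum_eq_zero fun i _ => ?_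
    rcases hs.1 i with h | h
    · exact h
    · have hle : s i ≤ t := Finset.single_le_sum (fun j _ => hs.nonneg j) (Finset.mem_univ i)
      rw [h] at hle
      linarith
  have ht0 : (0:ℝ) < t := by linarith
  have hc0 : 0 ≤ t⁻¹ := by positivity
  have hc1 : t⁻¹ ≤ 1 := by
    rw [inv_le_one_iff₀]; right; exact ht1
  refine ⟨t⁻¹ • Matrix.vecMulVec s s, ⟨?_, ?_, ?_, ?_⟩, fun I => escFeas_scaled hs hc0 hc1 I, ?_⟩
  · show (t⁻¹ • Matrix.vecMulVec s s)ᵀ = t⁻¹ • Matrix.vecMulVec s s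
    ext i j
    simp [Matrix.vecMulVec_apply, mul_comm]
  · have htr : (Matrix.vecMulVec s s).trace = t := by
      show ∑ i, s i * s i = t
      rw [ht]
      exact Finset.sum_congr rfl fun i _ => hs.sq i
    rw [Matrix.trace_smul, htr, smul_eq_mul, inv_mul_cancel₀ (ne_of_gt ht0)]
  · intro i j hij
    show t⁻¹ * (s i * s j) = 0
    rw [hs.2 i j hij, mul_zero]
  · exact posSemidef_smul' (vecMulVec_posSemidef s) hc0
  · have hss : ∑ i, ∑ j, s i * s j = t * t := by
      rw [ht, Finset.sum_mul_sum]
    calc ∑ i, ∑ j, (t⁻¹ • Matrix.vecMulVec s s) i j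
        = ∑ i, ∑ j, t⁻¹ * (s i * s j) := rfl
      _ = t⁻¹ * ∑ i, ∑ j, s i * s j := by
          simp_rw [← Finset.mul_sum]
      _ = t := by rw [hss, ← mul_assoc, inv_mul_cancel₀ (ne_of_gt ht0), one_mul]

lemma exists_single_stable (hn : 1 ≤ n) (G : SimpleGraph (Fin n)) :
    ∃ s : Fin n → ℝ, IsStableVec G s ∧ ∑ i, s i = 1 := by
  set i0 : Fin n := ⟨0, hn⟩
  refine ⟨fun j => if j = i0 then 1 else 0, ⟨fun j => ?_, fun p q hpq => ?_⟩, by simp⟩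
  · by_cases h : j = i0 <;> simp [h]
  · by_cases hp : p = i0
    · by_cases hq : q = i0
      · exfalso; rw [hp, hq] at hpq; exact G.irrefl hpq
      · simp [hq]
    · simp [hp]

lemma escFeas_empty (G : SimpleGraph (Fin n)) (X : Matrix (Fin n) (Fin n) ℝ) :
    escFeas G X ∅ := by
  show subMat X ∅ ∈ convexHull ℝ
    { M | ∃ t, IsStableVec (G.induce ((∅ : Finset (Fin n)) : Set (Fin n))) t
        ∧ M = Matrix.vecMulVec t t }
  refine subset_convexHull ℝ _ ⟨0, isStableVec_zero _, ?_⟩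
  ext x y
  exact absurd x.2 (by simp)

lemma escFeas_card_one {G : SimpleGraph (Fin n)} {X : Matrix (Fin n) (Fin n) ℝ}
    (hX : X ∈ cth2 G) {I : Finset (Fin n)} (hI : I.card = 1) : escFeas G X I := by
  obtain ⟨i, rfl⟩ := Finset.card_eq_one.mp hI
  show subMat X {i} ∈ convexHull ℝ
    { M | ∃ t, IsStableVec (G.induce (({i} : Finset (Fin n)) : Set (Fin n))) t
        ∧ M = Matrix.vecMulVec t t }
  have hone : IsStableVec (G.induce (({i} : Finset (Fin n)) : Set (Fin n)))
      (fun _ => (1 : ℝ)) := by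
    refine ⟨fun _ => Or.inr rfl, fun p q hpq => ?_⟩
    exfalso
    have hp : (p : Fin n) = i := by simpa using p.2
    have hq : (q : Fin n) = i := by simpa using q.2
    have hadj : G.Adj (p : Fin n) (q : Fin n) := hpq
    rw [hp, hq] at hadj
    exact G.irrefl hadj
  have h1m : Matrix.vecMulVec (fun _ => (1:ℝ)) (fun _ => (1:ℝ)) ∈
      { M | ∃ t, IsStableVec (G.induce (({i} : Finset (Fin n)) : Set (Fin n))) t
        ∧ M = Matrix.vecMulVec t t } := ⟨_, hone, rfl⟩
  have h0m : (0 : Matrix _ _ ℝ) ∈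
      { M | ∃ t, IsStableVec (G.induce (({i} : Finset (Fin n)) : Set (Fin n))) t
        ∧ M = Matrix.vecMulVec t t } := ⟨0, isStableVec_zero _, vecMulVec_zero'.symm⟩
  have heq : subMat X {i} = (X i i) • Matrix.vecMulVec (fun _ => (1:ℝ)) (fun _ => (1:ℝ))
      + (1 - X i i) • (0 : Matrix _ _ ℝ) := by
    ext p q
    have hp : (p : Fin n) = i := by simpa using p.2
    have hq : (q : Fin n) = i := by simpa using q.2
    simp [subMat, Matrix.vecMulVec_apply, hp, hq]
  rw [heq]
  exact segment_subset_convexHull h1m h0m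
    ⟨X i i, 1 - X i i, cth2_diag_nonneg hX i, by linarith [cth2_diag_le_one hX i], by ring, rfl⟩

lemma sum_le_alpha {G : SimpleGraph (Fin n)} {X : Matrix (Fin n) (Fin n) ℝ}
    (hX : X ∈ cth2 G) {a : ℝ}
    (ha : ∀ r ∈ { r | ∃ s, IsStableVec G s ∧ r = ∑ i, s i }, r ≤ a)
    (hesc : escFeas G X Finset.univ) : ∑ i, ∑ j, X i j ≤ a := by
  classical
  let e : Fin n → ↥((Finset.univ : Finset (Fin n)) : Set (Fin n)) := fun i => ⟨i, by simp⟩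
  have he : Function.Bijective e :=
    ⟨fun x y h => congrArg Subtype.val h, fun x => ⟨x.1, Subtype.ext rfl⟩⟩
  let g : Matrix ↥((Finset.univ : Finset (Fin n)) : Set (Fin n))
      ↥((Finset.univ : Finset (Fin n)) : Set (Fin n)) ℝ →ₗ[ℝ] ℝ :=
    { toFun := fun M => (∑ x, ∑ y, M x y) - a * ∑ x, M x x
      map_add' := fun A B => by
        simp only [Matrix.add_apply, Finset.sum_add_distrib, mul_add]
        ring
      map_smul' := fun c A => by
        simp only [Matrix.smul_apply, smul_eq_mul, RingHom.id_apply, ← Finset.mul_sum]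
        ring }
  have hconv : Convex ℝ {M | g M ≤ 0} := by
    have h := (convex_Iic (0:ℝ)).linear_preimage g
    exact h
  have hgen : { M | ∃ t, IsStableVec
        (G.induce ((Finset.univ : Finset (Fin n)) : Set (Fin n))) t
        ∧ M = Matrix.vecMulVec t t } ⊆ {M | g M ≤ 0} := by
    rintro M ⟨t, ht, rfl⟩
    have hts : ∑ x, t x ≤ a := by
      have hsum : ∑ i, (t ∘ e) i = ∑ x, t x :=
        Fintype.sum_bijective e he (t ∘ e) t (fun i => rfl)
      have := ha _ ⟨t ∘ e, ht.comp e (fun i j h => h), rfl⟩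
      linarith
    have htn : 0 ≤ ∑ x, t x := Finset.sum_nonneg fun x _ => ht.nonneg x
    show (∑ x, ∑ y, t x * t y) - a * ∑ x, t x * t x ≤ 0
    have hdiag : ∑ x, t x * t x = ∑ x, t x := Finset.sum_congr rfl fun x _ => ht.sq x
    have hdouble : ∑ x, ∑ y, t x * t y = (∑ x, t x) * (∑ x, t x) :=
      (Finset.sum_mul_sum _ _ _ _).symm
    rw [hdiag, hdouble]
    nlinarith
  have hmem : subMat X Finset.univ ∈ {M | g M ≤ 0} := convexHull_min hgen hconv hesc
  have hd : ∑ x, ∑ y, (subMat X Finset.univ) x y = ∑ i, ∑ j, X i j := by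
    refine (Fintype.sum_bijective e he _ _ fun i => ?_).symm
    exact (Fintype.sum_bijective e he (fun j => X i j)
      (fun y => (subMat X Finset.univ) (e i) y) (fun j => rfl))
  have hdg : ∑ x, (subMat X Finset.univ) x x = 1 := by
    have h1 : ∑ i, X i i = 1 := hX.2.1
    have := Fintype.sum_bijective e he (fun i => X i i)
      (fun x => (subMat X Finset.univ) x x) (fun i => rfl)
    linarith
  have hfin : (∑ x, ∑ y, (subMat X Finset.univ) x y) - a * ∑ x, (subMat X Finset.univ) x x ≤ 0 :=
    hmem
  rw [hd, hdg, mul_one] at hfin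
  linarith

end Helpers

/-- properties of the compressed exact subgraph hierarchy:
`ϑ(G) = z^C_0(G) = z^C_1(G)`, the levels are monotone nonincreasing, and
`z^C_n(G) = α(G)`. -/
theorem stmt6 {n : ℕ} (hn : 1 ≤ n) (G : SimpleGraph (Fin n)) (a : ℝ)
    (ha : IsGreatest { r | ∃ s, IsStableVec G s ∧ r = ∑ i, s i } a) :
    sSup { r | ∃ X, X ∈ cth2 G ∧ r = ∑ i, ∑ j, X i j } = zC G (Jk n 0) ∧
    zC G (Jk n 0) = zC G (Jk n 1) ∧
    (∀ k, 1 ≤ k → k ≤ n → zC G (Jk n k) ≤ zC G (Jk n (k - 1))) ∧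
    zC G (Jk n n) = a := by
  classical
  have hset0 : { r | ∃ X, X ∈ cth2 G ∧ (∀ I ∈ Jk n 0, escFeas G X I) ∧ r = ∑ i, ∑ j, X i j }
      = { r | ∃ X, X ∈ cth2 G ∧ r = ∑ i, ∑ j, X i j } := by
    ext r
    constructor
    · rintro ⟨X, hX, -, rfl⟩; exact ⟨X, hX, rfl⟩
    · rintro ⟨X, hX, rfl⟩
      refine ⟨X, hX, fun I hI => ?_, rfl⟩
      have hIe : I = ∅ := Finset.card_eq_zero.mp hI
      rw [hIe]
      exact escFeas_empty G X
  have hset1 : { r | ∃ X, X ∈ cth2 G ∧ (∀ I ∈ Jk n 1, escFeas G X I) ∧ r = ∑ i, ∑ j, X i j }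
      = { r | ∃ X, X ∈ cth2 G ∧ r = ∑ i, ∑ j, X i j } := by
    ext r
    constructor
    · rintro ⟨X, hX, -, rfl⟩; exact ⟨X, hX, rfl⟩
    · rintro ⟨X, hX, rfl⟩
      exact ⟨X, hX, fun I hI => escFeas_card_one hX hI, rfl⟩
  refine ⟨?_, ?_, ?_, ?_⟩
  · simp only [zC]
    rw [hset0]
  · simp only [zC]
    rw [hset0, hset1]
  · intro k hk1 hkn
    simp only [zC]
    apply csSup_le_csSup
    · exact ⟨(n : ℝ), fun r hr => by obtain ⟨X, hX, -, rfl⟩ := hr; exact cth2_sum_le_n hX⟩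
    · obtain ⟨s, hs, hsum⟩ := exists_single_stable hn G
      obtain ⟨X, hX, hesc, hXsum⟩ := stable_feas hs (by rw [hsum]; norm_num)
      exact ⟨∑ i, ∑ j, X i j, X, hX, fun I _ => hesc I, rfl⟩
    · rintro r ⟨X, hX, hesc, rfl⟩
      refine ⟨X, hX, fun I hI => ?_, rfl⟩
      have hIc : I.card = k - 1 := hI
      obtain ⟨I', hsub, hI'c⟩ := Finset.exists_superset_card_eq (n := k)
        (by rw [hIc]; exact Nat.sub_le k 1) (by rw [Fintype.card_fin]; exact hkn)
      exact esc_mono G X hsub (hesc I' hI'c)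
  · have h1a : (1 : ℝ) ≤ a := by
      obtain ⟨s, hs, hsum⟩ := exists_single_stable hn G
      have := ha.2 ⟨s, hs, hsum.symm⟩
      linarith
    simp only [zC]
    apply IsGreatest.csSup_eq
    constructor
    · obtain ⟨s0, hs0, hsa⟩ := ha.1
      have hne : ∑ i, s0 i ≠ 0 := by rw [← hsa]; exact ne_of_gt (by linarith)
      obtain ⟨X, hX, hesc, hXsum⟩ := stable_feas hs0 hne
      exact ⟨X, hX, fun I _ => hesc I, by rw [hXsum]; exact hsa⟩
    · rintro r ⟨X, hX, hesc, rfl⟩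
      refine sum_le_alpha hX ha.2 (hesc Finset.univ ?_)
      show (Finset.univ : Finset (Fin n)).card = n
      exact Finset.card_fin n
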